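/- Let the lower level solution map be S(x) = argmin_y { c(x)ᵀy | A(x) + B(x)y ≤ 0 }, where c : ℝⁿ → ℝᵐ, A : ℝⁿ → ℝ^q, and B : ℝⁿ → ℝ^{q×m} are locally Lipschitz continuous. Fix (x̄,ȳ) ∈ gph S at which S is inner semicontinuous. Let I(x̄,ȳ) = { i ∈ {1,…,q} | A_i(x̄) + (B(x̄)ȳ)_i = 0 } and let 𝓑(x) be the matrix whose rows are c(x)ᵀ together with the rows of B(x) with index in I(x̄,ȳ). Assume there is a neighbourhood U ⊆ ℝⁿ of x̄ such that for every subset J of the row indices of 𝓑, the submatrix 𝓑(x)_J (keeping only the rows in J) has rank independent of x ∈ U. Then the R-regularity constraint qualification (RRCQ) holds at (x̄,ȳ). -/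

import Mathlib

open Filter Topology
open scoped RealInnerProductSpace
open scoped ENNReal NNReal

/-- Optimal value function `φ(x) = inf { f(x,y) | g(x,y) ≤ 0 }`, an extended real. -/
noncomputable def phi {n m q : ℕ} (f : (Fin n → ℝ) → (Fin m → ℝ) → ℝ)
    (g : (Fin n → ℝ) → (Fin m → ℝ) → Fin q → ℝ) (x : Fin n → ℝ) : EReal :=
  sInf {v : EReal | ∃ y : Fin m → ℝ, (∀ i, g x y i ≤ 0) ∧ v = ((f x y : ℝ) : EReal)}

/-- Lower level solution set `S(x) = argmin_y { f(x,y) | g(x,y) ≤ 0 }`. -/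
def Sol {n m q : ℕ} (f : (Fin n → ℝ) → (Fin m → ℝ) → ℝ)
    (g : (Fin n → ℝ) → (Fin m → ℝ) → Fin q → ℝ) (x : Fin n → ℝ) : Set (Fin m → ℝ) :=
  {y | (∀ i, g x y i ≤ 0) ∧ ∀ z, (∀ i, g x z i ≤ 0) → f x y ≤ f x z}

/-- `(x̄,ȳ)` is a local minimizer of (BPP). -/
def IsLocalMinBPP {n m q : ℕ} (F : (Fin n → ℝ) → (Fin m → ℝ) → ℝ)
    (X : Set (Fin n → ℝ)) (f : (Fin n → ℝ) → (Fin m → ℝ) → ℝ)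
    (g : (Fin n → ℝ) → (Fin m → ℝ) → Fin q → ℝ)
    (xb : Fin n → ℝ) (yb : Fin m → ℝ) : Prop :=
  xb ∈ X ∧ yb ∈ Sol f g xb ∧
    ∃ ε : ℝ, 0 < ε ∧ ∀ x y, dist x xb < ε → dist y yb < ε → x ∈ X → y ∈ Sol f g x →
      F xb yb ≤ F x y

/-- (BPP) is partially calm at `(x̄,ȳ)`. -/
def PartiallyCalm {n m q : ℕ} (F : (Fin n → ℝ) → (Fin m → ℝ) → ℝ)
    (X : Set (Fin n → ℝ)) (f : (Fin n → ℝ) → (Fin m → ℝ) → ℝ)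
    (g : (Fin n → ℝ) → (Fin m → ℝ) → Fin q → ℝ)
    (xb : Fin n → ℝ) (yb : Fin m → ℝ) : Prop :=
  ∃ δ : ℝ, 0 < δ ∧ ∃ κ : ℝ, 0 < κ ∧ ∀ (x : Fin n → ℝ) (y : Fin m → ℝ) (u : ℝ),
    dist x xb ≤ δ → dist y yb ≤ δ → |u| ≤ δ → x ∈ X →
    ((f x y : ℝ) : EReal) - phi f g x ≤ ((u : ℝ) : EReal) → (∀ i, g x y i ≤ 0) →
    F xb yb ≤ F x y + κ * |u|

/-- The R-regularity constraint qualification (RRCQ) at `(x̄,ȳ) ∈ gph S`: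
`dist(y,Φ(x)) ≤ κ·max{0, f(x,y) − φ(x), g₁(x,y), …, g_q(x,y)}` for all `(x,y)` near
`(x̄,ȳ)` with `Φ(x) ≠ ∅` (note `Φ(x) = S(x)`, so that `φ(x)` is finite there). -/
def RRCQ {n m q : ℕ} (f : (Fin n → ℝ) → (Fin m → ℝ) → ℝ)
    (g : (Fin n → ℝ) → (Fin m → ℝ) → Fin q → ℝ)
    (xb : Fin n → ℝ) (yb : Fin m → ℝ) : Prop :=
  ∃ κ : ℝ, 0 < κ ∧ ∃ ε : ℝ, 0 < ε ∧ ∀ (x : Fin n → ℝ) (y : Fin m → ℝ),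
    dist x xb < ε → dist y yb < ε → (Sol f g x).Nonempty →
    Metric.infDist y (Sol f g x) ≤
      κ * max (max 0 (f x y - (phi f g x).toReal))
        (Finset.univ.fold max 0 fun i => g x y i)

/-- Inner semicontinuity of a set-valued map at a point of its graph. -/
def InnerSemicontinuous {n m : ℕ} (S : (Fin n → ℝ) → Set (Fin m → ℝ))
    (xb : Fin n → ℝ) (yb : Fin m → ℝ) : Prop :=
  ∀ x : ℕ → (Fin n → ℝ), Tendsto x atTop (𝓝 xb) →
    ∃ y : ℕ → (Fin m → ℝ), Tendsto y atTop (𝓝 yb) ∧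
      ∀ᶠ k in atTop, y k ∈ S (x k)

/-- The rows of the matrix `𝓑(x)`: the row `c(x)ᵀ` (index `none`) together with the rows
`B(x)_j` (index `some j`, used for `j ∈ I(x̄,ȳ)`). -/
def Brow {n m q : ℕ} (c : (Fin n → ℝ) → Fin m → ℝ) (B : (Fin n → ℝ) → Fin q → Fin m → ℝ)
    (x : Fin n → ℝ) (io : Option (Fin q)) : Fin m → ℝ :=
  io.elim (c x) (fun j => B x j)

set_option maxHeartbeats 1600000

section AuxRRCQ
section Cara
variable {E : Type*} [AddCommGroup E] [Module ℝ E] {ι : Type*} [Fintype ι]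

/-- Conic Carathéodory: a nonnegative combination can be rewritten with linearly
independent support, without enlarging the support. -/
theorem cone_caratheodory (w : ι → E) (u : ι → ℝ) (hu : ∀ i, 0 ≤ u i) :
    ∃ u' : ι → ℝ, (∀ i, 0 ≤ u' i) ∧ (∀ i, u' i ≠ 0 → u i ≠ 0) ∧
      (∑ i, u' i • w i = ∑ i, u i • w i) ∧
      LinearIndependent ℝ (fun i : {i // u' i ≠ 0} => w i) := by
  classical
  generalize hN : (Finset.univ.filter (fun i => u i ≠ 0)).card = N
  induction N using Nat.strong_induction_on generalizing u with
  | _ N ih =>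
  by_cases hind : LinearIndependent ℝ (fun i : {i // u i ≠ 0} => w i)
  · exact ⟨u, hu, fun i h => h, rfl, hind⟩
  · -- there is a nontrivial relation on the support
    rw [Fintype.not_linearIndependent_iff] at hind
    obtain ⟨g, hg0, j₀, hj₀⟩ := hind
    -- extend g to ι
    set γ : ι → ℝ := fun i => if h : u i ≠ 0 then g ⟨i, h⟩ else 0 with hγ
    have hγsum : ∑ i, γ i • w i = 0 := by
      rw [← Finset.sum_filter_add_sum_filter_not Finset.univ (fun i => u i ≠ 0)]
      have h1 : ∑ i ∈ Finset.univ.filter (fun i => u i ≠ 0), γ i • w i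
          = ∑ i : {i // u i ≠ 0}, g i • w i := by
        rw [Finset.sum_subtype (Finset.univ.filter (fun i => u i ≠ 0))
          (p := fun i => u i ≠ 0) (by simp) (fun i => γ i • w i)]
        apply Finset.sum_congr rfl
        intro i _
        have hi : u i ≠ 0 := i.2
        simp [hγ, hi]
      have h2 : ∑ i ∈ Finset.univ.filter (fun i => ¬ u i ≠ 0), γ i • w i = 0 := by
        apply Finset.sum_eq_zero
        intro i hi
        simp only [Finset.mem_filter] at hi
        simp [hγ, hi.2]
      rw [h1, h2, hg0, add_zero]
    have hγsupp : ∀ i, γ i ≠ 0 → u i ≠ 0 := by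
      intro i h
      by_contra h'
      simp [hγ, h'] at h
    -- wlog there is a positive coefficient
    have hex : ∃ γ' : ι → ℝ, (∑ i, γ' i • w i = 0) ∧ (∀ i, γ' i ≠ 0 → u i ≠ 0) ∧
        ∃ i, 0 < γ' i := by
      rcases lt_trichotomy (γ j₀.1) 0 with h | h | h
      · exact ⟨-γ, by simp [hγsum], fun i hi => hγsupp i (by simpa using hi),
          j₀.1, by simpa using h⟩
      · exfalso; apply hj₀
        have : γ j₀.1 = g j₀ := by simp [hγ, j₀.2]
        rw [← this, h]
      · exact ⟨γ, hγsum, hγsupp, j₀.1, h⟩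
    obtain ⟨γ', hγ'sum, hγ'supp, hγ'pos⟩ := hex
    -- shrink
    have hposne : (Finset.univ.filter (fun i => 0 < γ' i)).Nonempty := by
      obtain ⟨i, hi⟩ := hγ'pos
      exact ⟨i, by simp [hi]⟩
    obtain ⟨i₀, hi₀mem, hi₀min⟩ := Finset.exists_min_image _ (fun i => u i / γ' i) hposne
    simp only [Finset.mem_filter, Finset.mem_univ, true_and] at hi₀mem
    set τ := u i₀ / γ' i₀ with hτ
    have hτ0 : 0 ≤ τ := div_nonneg (hu i₀) hi₀mem.le
    set u'' : ι → ℝ := fun i => u i - τ * γ' i with hu''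
    have hu''0 : ∀ i, 0 ≤ u'' i := by
      intro i
      rcases le_or_gt (γ' i) 0 with h | h
      · have : τ * γ' i ≤ 0 := mul_nonpos_of_nonneg_of_nonpos hτ0 h
        have hui := hu i
        simp only [hu'']; linarith
      · have := hi₀min i (by simp [h])
        have h2 : τ ≤ u i / γ' i := this
        have := (le_div_iff₀ h).mp h2
        simp only [hu'']; linarith
    have hu''supp : ∀ i, u'' i ≠ 0 → u i ≠ 0 := by
      intro i h
      by_contra h'
      by_cases hgi : γ' i = 0
      · apply h; simp [hu'', h', hgi]
      · exact hγ'supp i hgi h'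
    have hu''sum : ∑ i, u'' i • w i = ∑ i, u i • w i := by
      simp only [hu'', sub_smul, Finset.sum_sub_distrib, mul_smul]
      rw [← Finset.smul_sum, hγ'sum, smul_zero, sub_zero]
    have hu''i₀ : u'' i₀ = 0 := by
      have h : u'' i₀ = u i₀ - u i₀ / γ' i₀ * γ' i₀ := rfl
      rw [h, div_mul_cancel₀ _ (ne_of_gt hi₀mem), sub_self]
    have hcard : (Finset.univ.filter (fun i => u'' i ≠ 0)).card < N := by
      rw [← hN]
      apply Finset.card_lt_card
      constructor
      · intro i hi
        simp only [Finset.mem_filter, Finset.mem_univ, true_and] at hi ⊢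
        exact hu''supp i hi
      · intro hsub
        have hi₀u : u i₀ ≠ 0 := hγ'supp i₀ (ne_of_gt hi₀mem)
        have := hsub (by simp [hi₀u] : i₀ ∈ Finset.univ.filter (fun i => u i ≠ 0))
        simp only [Finset.mem_filter, Finset.mem_univ, true_and] at this
        exact this hu''i₀
    obtain ⟨u', h1, h2, h3, h4⟩ := ih _ hcard u'' hu''0 rfl
    exact ⟨u', h1, fun i hi => hu''supp i (h2 i hi), h3.trans hu''sum, h4⟩
end Cara

section Cone
variable {E : Type*} [NormedAddCommGroup E] [InnerProductSpace ℝ E] [FiniteDimensional ℝ E]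
variable {ι : Type*} [Fintype ι]

/-- The set of nonnegative combinations of a finite family. -/
def coneSet (w : ι → E) : Set E :=
  {v | ∃ u : ι → ℝ, (∀ i, 0 ≤ u i) ∧ v = ∑ i, u i • w i}


theorem isClosed_coneSet (w : ι → E) : IsClosed (coneSet w) := by
  classical
  -- for each finset S with independent rows, the corresponding piece is closed
  have piece : ∀ S : Finset ι, LinearIndependent ℝ (fun i : ↥S => w i) →
      IsClosed ((fun u : ↥S → ℝ => ∑ i : ↥S, u i • w i) '' {u | ∀ i, 0 ≤ u i}) := by
    intro S hS
    set T : (↥S → ℝ) →ₗ[ℝ] E :=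
      { toFun := fun u => ∑ i : ↥S, u i • w i
        map_add' := by
          intro a b; simp [add_smul, Finset.sum_add_distrib]
        map_smul' := by
          intro c a; simp [smul_smul, Finset.smul_sum] } with hT
    have hinj : Function.Injective T := by
      rw [← LinearMap.ker_eq_bot, LinearMap.ker_eq_bot']
      intro v hv
      have := (Fintype.linearIndependent_iff.mp hS) v hv
      funext i; exact this i
    have hemb := LinearMap.isClosedEmbedding_of_injective (LinearMap.ker_eq_bot.mpr hinj)
    have hcl : IsClosed {u : ↥S → ℝ | ∀ i, 0 ≤ u i} := by
      have : {u : ↥S → ℝ | ∀ i, 0 ≤ u i} = ⋂ i, {u | 0 ≤ u i} := by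
        ext u; simp [Set.mem_iInter]
      rw [this]
      exact isClosed_iInter fun i => isClosed_le continuous_const (continuous_apply i)
    exact hemb.isClosedMap _ hcl
  -- the cone is the finite union of such pieces
  have main : coneSet w = ⋃ (S : Finset ι), ⋃ (_ : LinearIndependent ℝ (fun i : ↥S => w i)),
      ((fun u : ↥S → ℝ => ∑ i : ↥S, u i • w i) '' {u | ∀ i, 0 ≤ u i}) := by
    ext v
    constructor
    · rintro ⟨u, hu, rfl⟩
      obtain ⟨u', h1, h2, h3, h4⟩ := cone_caratheodory w u hu
      set S : Finset ι := Finset.univ.filter (fun i => u' i ≠ 0) with hSdef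
      have hmem : ∀ i : ι, i ∈ S ↔ u' i ≠ 0 := by intro i; simp [hSdef]
      have hind : LinearIndependent ℝ (fun i : ↥S => w i) := by
        have h5 := h4.comp (fun i : ↥S => (⟨(i : ι), (hmem i).mp i.2⟩ : {j // u' j ≠ 0}))
          (fun a b hab => Subtype.ext (by simpa using congrArg Subtype.val hab))
        exact h5
      refine Set.mem_iUnion.mpr ⟨S, Set.mem_iUnion.mpr ⟨hind, ?_⟩⟩
      refine ⟨fun i => u' i, fun i => h1 i, ?_⟩
      show (∑ i : ↥S, u' (i : ι) • w (i : ι)) = ∑ i : ι, u i • w i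
      rw [← h3]
      rw [Finset.sum_coe_sort S (fun i => u' i • w i)]
      exact Finset.sum_subset (Finset.subset_univ S) (by
        intro i _ hi
        have : ¬ u' i ≠ 0 := fun h => hi ((hmem i).mpr h)
        rw [not_not] at this
        simp [this])
    · intro hv
      simp only [Set.mem_iUnion] at hv
      obtain ⟨S, _, u, hu, rfl⟩ := hv
      refine ⟨fun i => if h : i ∈ S then u ⟨i, h⟩ else 0, ?_, ?_⟩
      · intro i
        by_cases h : i ∈ S
        · simpa [h] using hu ⟨i, h⟩
        · simp [h]
      · show (∑ i : ↥S, u i • w (i : ι))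
            = ∑ i : ι, (if h : i ∈ S then u ⟨i, h⟩ else 0) • w i
        rw [← Finset.sum_subset (Finset.subset_univ S) (f := fun i =>
            (if h : i ∈ S then u ⟨i, h⟩ else 0) • w i) (by
          intro i _ hi
          simp [hi])]
        rw [← Finset.sum_coe_sort S
          (fun i => (if h : i ∈ S then u ⟨i, h⟩ else 0) • w i)]
        apply Finset.sum_congr rfl
        intro i _
        simp [i.2]
  rw [main]
  exact isClosed_iUnion_of_finite fun S =>
    isClosed_iUnion_of_finite fun hS => piece S hS

/-- `coneSet` as a convex cone. -/
def coneCone (w : ι → E) : ConvexCone ℝ E where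
  carrier := coneSet w
  smul_mem' := by
    rintro c hc v ⟨u, hu, rfl⟩
    exact ⟨fun i => c * u i, fun i => mul_nonneg hc.le (hu i), by
      simp [Finset.smul_sum, mul_smul]⟩
  add_mem' := by
    rintro v ⟨u, hu, rfl⟩ v' ⟨u', hu', rfl⟩
    exact ⟨fun i => u i + u' i, fun i => add_nonneg (hu i) (hu' i), by
      simp [add_smul, Finset.sum_add_distrib]⟩

theorem proj_residual_repr (w : ι → E) (b : ι → ℝ) (p t : E)
    (hp : ∀ i, ⟪w i, p⟫ ≤ b i)
    (hproj : ∀ z : E, (∀ i, ⟪w i, z⟫ ≤ b i) → ⟪t - p, z - p⟫ ≤ 0) :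
    ∃ u : ι → ℝ, (∀ i, 0 ≤ u i) ∧ (∀ i, u i ≠ 0 → ⟪w i, p⟫ = b i) ∧
      t - p = ∑ i, u i • w i := by
  classical
  set K : Set ι := {i | ⟪w i, p⟫ = b i} with hK
  set wK : ↥K → E := fun i => w i with hwK
  by_cases hmem : t - p ∈ coneSet wK
  · obtain ⟨u, hu, hsum⟩ := hmem
    refine ⟨fun i => if h : i ∈ K then u ⟨i, h⟩ else 0, ?_, ?_, ?_⟩
    · intro i
      by_cases h : i ∈ K
      · simpa [h] using hu ⟨i, h⟩
      · simp [h]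
    · intro i hi
      by_cases h : i ∈ K
      · exact h
      · simp [h] at hi
    · refine hsum.trans ?_
      show (∑ i : ↥K, u i • wK i)
          = ∑ i : ι, (if h : i ∈ K then u ⟨i, h⟩ else 0) • w i
      have e0 : (∑ i : ↥K, u i • wK i)
          = ∑ i : {i // i ∈ K}, (if h : (i : ι) ∈ K then u ⟨i, h⟩ else 0) • w (i : ι) := by
        apply Finset.sum_congr rfl
        intro i _
        have hiK : (i : ι) ∈ K := i.2
        simp only [hiK, dif_pos]; rfl
      rw [e0, ← Finset.sum_subtype (Finset.univ.filter (fun i => i ∈ K))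
        (p := fun i => i ∈ K) (by simp)
        (fun i => (if h : i ∈ K then u ⟨i, h⟩ else 0) • w i)]
      exact Finset.sum_subset (Finset.subset_univ _) (by
        intro i _ hi
        simp only [Finset.mem_filter, Finset.mem_univ, true_and] at hi
        simp [hi])
  · exfalso
    obtain ⟨y, hy1, hy2⟩ :=
      ProperCone.hyperplane_separation' (E := E)
        ({ carrier := coneSet wK
           add_mem' := by
             rintro v v' ⟨u, hu, rfl⟩ ⟨u', hu', rfl⟩
             exact ⟨fun i => u i + u' i, fun i => add_nonneg (hu i) (hu' i), by
               simp [add_smul, Finset.sum_add_distrib]⟩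
           zero_mem' := ⟨fun _ => 0, fun i => le_refl 0, by simp⟩
           smul_mem' := by
             rintro c v ⟨u, hu, rfl⟩
             exact ⟨fun i => (c : ℝ) * u i, fun i => mul_nonneg c.2 (hu i), by
               simp [NNReal.smul_def, Finset.smul_sum, mul_smul]⟩
           isClosed' := isClosed_coneSet wK } : ProperCone ℝ E) hmem
    set h : E := -y with hh
    have hwh : ∀ i : ↥K, ⟪w i, h⟫ ≤ 0 := by
      intro i
      have hwc : (w i : E) ∈ coneCone wK := by
        refine ⟨fun j => if j = i then 1 else 0, by intro j; positivity, ?_⟩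
        show w (i : ι) = ∑ j : ↥K, (if j = i then (1:ℝ) else 0) • wK j
        simp [ite_smul, Finset.sum_ite_eq', hwK]
      have := hy1 _ hwc
      rw [hh]
      rw [inner_neg_right]
      linarith
    have hth : 0 < ⟪t - p, h⟫ := by
      rw [hh, inner_neg_right]
      have : ⟪t - p, y⟫ < 0 := by
        exact hy2
      linarith
    -- find small ε > 0 with p + ε • h feasible
    have hev : ∀ᶠ ε in 𝓝[>] (0:ℝ), ∀ i, ⟪w i, p + ε • h⟫ ≤ b i := by
      rw [eventually_all]
      intro i
      by_cases hiK : i ∈ K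
      · apply Filter.eventually_of_mem self_mem_nhdsWithin
        intro ε hε
        rw [inner_add_right, real_inner_smul_right]
        have h1 : ⟪w i, p⟫ = b i := hiK
        have h2 : ⟪w i, h⟫ ≤ 0 := hwh ⟨i, hiK⟩
        have : (0:ℝ) < ε := hε
        nlinarith
      · have hlt : ⟪w i, p⟫ < b i := lt_of_le_of_ne (hp i) hiK
        have hcont : Tendsto (fun ε : ℝ => ⟪w i, p + ε • h⟫) (𝓝[>] 0) (𝓝 ⟪w i, p⟫) := by
          have : Continuous (fun ε : ℝ => ⟪w i, p + ε • h⟫) :=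
            continuous_const.inner (continuous_const.add (continuous_id.smul continuous_const))
          have h0 : ⟪w i, p + (0:ℝ) • h⟫ = ⟪w i, p⟫ := by simp
          have := this.tendsto 0
          rw [h0] at this
          exact this.mono_left nhdsWithin_le_nhds
        exact (hcont.eventually_lt_const hlt).mono fun ε hε => hε.le
    obtain ⟨ε, hfeas, hεpos⟩ := (hev.and (eventually_mem_nhdsWithin)).exists
    have := hproj (p + ε • h) hfeas
    rw [add_sub_cancel_left] at this
    rw [real_inner_smul_right] at this
    have hεpos' : (0:ℝ) < ε := hεpos
    nlinarith
end Cone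

section Hoff
variable {E : Type*} [NormedAddCommGroup E] [InnerProductSpace ℝ E] [FiniteDimensional ℝ E]
variable {ι : Type*} [Fintype ι]



/-- Hoffman-type error bound for a fixed system of linear inequalities, with a
constant controlled through a modulus for independent subfamilies. -/
theorem hoffman_fixed (w : ι → E) (b : ι → ℝ) (C R : ℝ) (hC : 0 ≤ C) (hR : 0 ≤ R)
    (hmod : ∀ u : ι → ℝ, (∀ i, 0 ≤ u i) →
      LinearIndependent ℝ (fun i : {i // u i ≠ 0} => w i) →
      ∑ i, u i ≤ C * ‖∑ i, u i • w i‖)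
    (hne : ∃ z : E, ∀ i, ⟪w i, z⟫ ≤ b i) (t : E)
    (hres : ∀ i, ⟪w i, t⟫ - b i ≤ R) :
    ∃ p : E, (∀ i, ⟪w i, p⟫ ≤ b i) ∧ ‖t - p‖ ≤ C * R := by
  classical
  set P : Set E := {z | ∀ i, ⟪w i, z⟫ ≤ b i} with hP
  have hPclosed : IsClosed P := by
    have : P = ⋂ i, {z | ⟪w i, z⟫ ≤ b i} := by
      ext z; simp [hP, Set.mem_iInter]
    rw [this]
    exact isClosed_iInter fun i =>
      isClosed_le (continuous_const.inner continuous_id) continuous_const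
  have hPconvex : Convex ℝ P := by
    intro z1 h1 z2 h2 a b' ha hb hab
    intro i
    have e1 : ⟪w i, a • z1 + b' • z2⟫ = a * ⟪w i, z1⟫ + b' * ⟪w i, z2⟫ := by
      rw [inner_add_right, real_inner_smul_right, real_inner_smul_right]
    rw [e1]
    calc a * ⟪w i, z1⟫ + b' * ⟪w i, z2⟫ ≤ a * b i + b' * b i := by
          apply add_le_add
          · exact mul_le_mul_of_nonneg_left (h1 i) ha
          · exact mul_le_mul_of_nonneg_left (h2 i) hb
      _ = b i := by rw [← add_mul, hab, one_mul]
  obtain ⟨z0, hz0⟩ := hne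
  obtain ⟨p, hpP, hpmin⟩ :=
    exists_norm_eq_iInf_of_complete_convex ⟨z0, (by exact hz0 : z0 ∈ P)⟩ (hPclosed.isComplete) hPconvex t
  have hvar : ∀ z ∈ P, ⟪t - p, z - p⟫ ≤ 0 :=
    (norm_eq_iInf_iff_real_inner_le_zero hPconvex hpP).mp hpmin
  obtain ⟨u, hu0, huact, hurepr⟩ := proj_residual_repr w b p t hpP
    (fun z hz => hvar z hz)
  obtain ⟨u', h1, h2, h3, h4⟩ := cone_caratheodory w u hu0
  have hurepr' : t - p = ∑ i, u' i • w i := by rw [h3, ← hurepr]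
  have hkey : ‖t - p‖ ^ 2 ≤ C * R * ‖t - p‖ := by
    have e1 : ‖t - p‖ ^ 2 = ⟪t - p, t - p⟫ := (real_inner_self_eq_norm_sq _).symm
    have e2 : ⟪t - p, t - p⟫ = ∑ i, u' i * ⟪w i, t - p⟫ := by
      nth_rewrite 1 [hurepr']
      rw [sum_inner]
      apply Finset.sum_congr rfl
      intro i _
      rw [real_inner_smul_left]
    have e3 : ∀ i, u' i * ⟪w i, t - p⟫ ≤ u' i * R := by
      intro i
      by_cases hi : u' i = 0
      · simp [hi]
      · have hact : ⟪w i, p⟫ = b i := huact i (h2 i hi)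
        have : ⟪w i, t - p⟫ = ⟪w i, t⟫ - b i := by
          rw [inner_sub_right, hact]
        rw [this]
        exact mul_le_mul_of_nonneg_left (hres i) (h1 i)
    have e4 : (∑ i, u' i * R) = (∑ i, u' i) * R := (Finset.sum_mul _ _ _).symm
    have e5 : (∑ i, u' i) * R ≤ C * ‖∑ i, u' i • w i‖ * R := by
      apply mul_le_mul_of_nonneg_right _ hR
      exact hmod u' h1 h4
    rw [e1, e2]
    calc ∑ i, u' i * ⟪w i, t - p⟫ ≤ ∑ i, u' i * R := Finset.sum_le_sum fun i _ => e3 i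
      _ ≤ (∑ i, u' i) * R := le_of_eq e4
      _ ≤ C * ‖∑ i, u' i • w i‖ * R := e5
      _ = C * R * ‖t - p‖ := by rw [← hurepr']; ring
  refine ⟨p, hpP, ?_⟩
  rcases eq_or_lt_of_le (norm_nonneg (t - p)) with h | h
  · rw [← h]; positivity
  · nlinarith [hkey]
end Hoff

section Bridge
variable {m : ℕ}

noncomputable def eE {m : ℕ} : (Fin m → ℝ) ≃ EuclideanSpace ℝ (Fin m) :=
  (WithLp.equiv 2 (Fin m → ℝ)).symm

theorem innerE (v z : Fin m → ℝ) : ⟪eE v, eE z⟫ = ∑ j, v j * z j := by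
  simp [eE, PiLp.inner_apply, RCLike.inner_apply, conj_trivial]
  exact Finset.sum_congr rfl fun j _ => mul_comm _ _

theorem eE_sub (a b : Fin m → ℝ) : eE a - eE b = eE (a - b) := rfl

theorem dist_le_norm_eE (a b : Fin m → ℝ) : dist a b ≤ ‖eE a - eE b‖ := by
  rw [dist_pi_le_iff (norm_nonneg _)]
  intro i
  have h1 : dist (a i) (b i) = |(eE a - eE b) i| := by
    rw [eE_sub]
    simp [eE, Real.dist_eq]
  rw [h1]
  have h2 : |(eE a - eE b) i| = Real.sqrt (((eE a - eE b) i) ^ 2) := by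
    rw [Real.sqrt_sq_eq_abs]
  rw [h2]
  rw [EuclideanSpace.norm_eq]
  apply Real.sqrt_le_sqrt
  calc ((eE a - eE b) i) ^ 2 = ‖(eE a - eE b) i‖ ^ 2 := by
        rw [Real.norm_eq_abs, sq_abs]
    _ ≤ ∑ j, ‖(eE a - eE b) j‖ ^ 2 := Finset.single_le_sum
        (f := fun j => ‖(eE a - eE b) j‖ ^ 2)
        (fun j _ => by positivity) (Finset.mem_univ i)

theorem continuous_eE : Continuous (fun v : Fin m → ℝ => eE v) :=
  (PiLp.continuousLinearEquiv 2 ℝ (fun _ : Fin m => ℝ)).symm.continuous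

theorem linearIndependent_eE_iff {ι : Type*} (v : ι → (Fin m → ℝ)) :
    LinearIndependent ℝ (fun i => eE (v i)) ↔ LinearIndependent ℝ v := by
  constructor
  · intro h
    have := h.map' (WithLp.linearEquiv 2 ℝ (Fin m → ℝ)).toLinearMap
      (LinearEquiv.ker _)
    exact this
  · intro h
    have := h.map' (WithLp.linearEquiv 2 ℝ (Fin m → ℝ)).symm.toLinearMap
      (LinearEquiv.ker _)
    exact this
end Bridge

section Unif
variable {E : Type*} [NormedAddCommGroup E] [InnerProductSpace ℝ E] [FiniteDimensional ℝ E]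
variable {ι : Type*} [Fintype ι]
variable {X : Type*} [MetricSpace X]

/-- Uniform modulus for independent nonnegative combinations over a compact parameter
set on which independence of subfamilies is constant. -/
theorem uniform_modulus (K : Set X) (hK : IsCompact K) (w : X → ι → E)
    (hw : ∀ i, Continuous fun x => w x i)
    (hcr : ∀ (S : Finset ι) (x : X), x ∈ K →
      LinearIndependent ℝ (fun i : ↥S => w x i) →
      ∀ x' ∈ K, LinearIndependent ℝ (fun i : ↥S => w x' i)) :
    ∃ C : ℝ, 0 ≤ C ∧ ∀ x ∈ K, ∀ u : ι → ℝ, (∀ i, 0 ≤ u i) →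
      LinearIndependent ℝ (fun i : {i // u i ≠ 0} => w x i) →
      ∑ i, u i ≤ C * ‖∑ i, u i • w x i‖ := by
  classical
  have hper : ∀ S : Finset ι, ∃ CS : ℝ, 0 ≤ CS ∧
      ((∀ x ∈ K, LinearIndependent ℝ (fun i : ↥S => w x i)) →
        ∀ x ∈ K, ∀ u : ι → ℝ, (∀ i, 0 ≤ u i) → (∀ i, u i ≠ 0 → i ∈ S) →
        ∑ i, u i ≤ CS * ‖∑ i, u i • w x i‖) := by
    intro S
    set Δ : Set (ι → ℝ) := {u | (∀ i, 0 ≤ u i) ∧ (∀ i, i ∉ S → u i = 0) ∧ ∑ i, u i = 1}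
      with hΔ
    set A : Set (X × (ι → ℝ)) := K ×ˢ Δ with hA
    by_cases hAne : A.Nonempty
    swap
    · -- no normalized vector exists: only u = 0 is possible
      refine ⟨1, zero_le_one, ?_⟩
      intro _ x hx u hu hsupp
      rcases eq_or_lt_of_le (Finset.sum_nonneg (fun i _ => hu i)) with h | h
      · rw [← h]; positivity
      · exfalso
        apply hAne
        set σ := ∑ i, u i with hσ
        refine ⟨(x, fun i => σ⁻¹ * u i), hx, ?_, ?_, ?_⟩
        · intro i; exact mul_nonneg (inv_nonneg.mpr h.le) (hu i)
        · intro i hi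
          have : u i = 0 := by
            by_contra hne
            exact hi (hsupp i hne)
          simp [this]
        · rw [← Finset.mul_sum, ← hσ, inv_mul_cancel₀ (ne_of_gt h)]
    · -- compact minimization
      have hΔcomp : IsCompact Δ := by
        apply Metric.isCompact_of_isClosed_isBounded
        · have : Δ = (⋂ i, {u : ι → ℝ | 0 ≤ u i}) ∩
              ((⋂ i, ⋂ (_ : i ∉ S), {u : ι → ℝ | u i = 0}) ∩
                {u : ι → ℝ | ∑ i, u i = 1}) := by
            ext u
            simp only [hΔ, Set.mem_setOf_eq, Set.mem_inter_iff, Set.mem_iInter]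
          rw [this]
          refine IsClosed.inter (isClosed_iInter fun i =>
            isClosed_le continuous_const (continuous_apply i)) (IsClosed.inter ?_ ?_)
          · exact isClosed_iInter fun i => isClosed_iInter fun _ =>
              isClosed_eq (continuous_apply i) continuous_const
          · exact isClosed_eq (by continuity) continuous_const
        · apply Metric.isBounded_closedBall (x := (0 : ι → ℝ)) (r := 1) |>.subset
          intro u hu
          rw [Metric.mem_closedBall, dist_pi_le_iff zero_le_one]
          intro i
          have h1 : 0 ≤ u i := hu.1 i
          have h2 : u i ≤ 1 := by
            rw [← hu.2.2]
            exact Finset.single_le_sum (fun j _ => hu.1 j) (Finset.mem_univ i)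
          simp only [Pi.zero_apply, Real.dist_eq, sub_zero]
          rw [abs_of_nonneg h1]
          exact h2
      have hAcomp : IsCompact A := hK.prod hΔcomp
      have hFcont : Continuous fun p : X × (ι → ℝ) => ‖∑ i, p.2 i • w p.1 i‖ := by
        apply Continuous.norm
        apply continuous_finset_sum
        intro i _
        exact ((continuous_apply i).comp continuous_snd).smul ((hw i).comp continuous_fst)
      obtain ⟨⟨x₀, u₀⟩, hmem₀, hmin⟩ := hAcomp.exists_isMinOn hAne hFcont.continuousOn
      set m : ℝ := ‖∑ i, u₀ i • w x₀ i‖ with hm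
      by_cases hmpos : 0 < m
      swap
      · -- then the independence premise must fail
        refine ⟨0, le_refl 0, ?_⟩
        intro hind
        exfalso
        apply hmpos
        rcases eq_or_lt_of_le (norm_nonneg (∑ i, u₀ i • w x₀ i)) with h | h
        swap
        · exact h
        exfalso
        have hzero : ∑ i, u₀ i • w x₀ i = 0 := by
          rw [← norm_eq_zero]; exact h.symm ▸ rfl
        have hx₀K : x₀ ∈ K := hmem₀.1
        have hu₀ : u₀ ∈ Δ := hmem₀.2
        have hSsum : ∑ i : ↥S, u₀ (i : ι) • w x₀ (i : ι) = 0 := by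
          rw [Finset.sum_coe_sort S (fun i => u₀ i • w x₀ i)]
          rw [Finset.sum_subset (Finset.subset_univ S) (by
            intro i _ hi
            rw [hu₀.2.1 i hi, zero_smul])]
          exact hzero
        have := Fintype.linearIndependent_iff.mp (hind x₀ hx₀K)
          (fun i : ↥S => u₀ (i : ι)) hSsum
        have hall : ∀ i, u₀ i = 0 := by
          intro i
          by_cases hiS : i ∈ S
          · exact this ⟨i, hiS⟩
          · exact hu₀.2.1 i hiS
        have : (1:ℝ) = 0 := by
          rw [← hu₀.2.2]
          exact Finset.sum_eq_zero fun i _ => hall i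
        norm_num at this
      · refine ⟨1 / m, by positivity, ?_⟩
        intro _ x hx u hu hsupp
        rcases eq_or_lt_of_le (Finset.sum_nonneg (fun i _ => hu i)) with h | h
        · rw [← h]; positivity
        · set σ := ∑ i, u i with hσ
          have hmem : (x, fun i => σ⁻¹ * u i) ∈ A := by
            refine ⟨hx, ?_, ?_, ?_⟩
            · intro i; exact mul_nonneg (inv_nonneg.mpr h.le) (hu i)
            · intro i hi
              have : u i = 0 := by
                by_contra hne
                exact hi (hsupp i hne)
              simp [this]
            · rw [← Finset.mul_sum, ← hσ, inv_mul_cancel₀ (ne_of_gt h)]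
          have hle := hmin hmem
          have hval : ‖∑ i, (σ⁻¹ * u i) • w x i‖ = σ⁻¹ * ‖∑ i, u i • w x i‖ := by
            have : ∑ i, (σ⁻¹ * u i) • w x i = σ⁻¹ • ∑ i, u i • w x i := by
              rw [Finset.smul_sum]
              apply Finset.sum_congr rfl
              intro i _
              rw [smul_smul]
            rw [this, norm_smul, Real.norm_eq_abs, abs_of_nonneg (inv_nonneg.mpr h.le)]
          have hm_le : m ≤ σ⁻¹ * ‖∑ i, u i • w x i‖ := by
            have : m ≤ ‖∑ i, (σ⁻¹ * u i) • w x i‖ := hle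
            rwa [hval] at this
          rw [div_mul_eq_mul_div, le_div_iff₀ hmpos, mul_comm, one_mul]
          calc m * σ ≤ (σ⁻¹ * ‖∑ i, u i • w x i‖) * σ :=
                mul_le_mul_of_nonneg_right hm_le h.le
            _ = ‖∑ i, u i • w x i‖ := by
                rw [mul_comm (σ⁻¹) _, mul_assoc, inv_mul_cancel₀ (ne_of_gt h), mul_one]
  choose Cf hCf0 hCf using hper
  refine ⟨∑ S : Finset ι, Cf S, Finset.sum_nonneg fun S _ => hCf0 S, ?_⟩
  intro x hx u hu hind
  set S : Finset ι := Finset.univ.filter (fun i => u i ≠ 0) with hSdef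
  have hmem : ∀ i : ι, i ∈ S ↔ u i ≠ 0 := by intro i; simp [hSdef]
  have hindS : LinearIndependent ℝ (fun i : ↥S => w x i) := by
    have h5 := hind.comp (fun i : ↥S => (⟨(i : ι), (hmem i).mp i.2⟩ : {j // u j ≠ 0}))
      (fun a b hab => Subtype.ext (by simpa using congrArg Subtype.val hab))
    exact h5
  have hstep := hCf S (hcr S x hx hindS) x hx u hu (fun i hi => (hmem i).mpr hi)
  calc ∑ i, u i ≤ Cf S * ‖∑ i, u i • w x i‖ := hstep
    _ ≤ (∑ S' : Finset ι, Cf S') * ‖∑ i, u i • w x i‖ := by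
        apply mul_le_mul_of_nonneg_right _ (norm_nonneg _)
        exact Finset.single_le_sum (fun S' _ => hCf0 S') (Finset.mem_univ S)
end Unif


section Glue
variable {n m q : ℕ} {f : (Fin n → ℝ) → (Fin m → ℝ) → ℝ}
  {g : (Fin n → ℝ) → (Fin m → ℝ) → Fin q → ℝ}

theorem phi_eq_of_sol {x : Fin n → ℝ} {y₀ : Fin m → ℝ} (h : y₀ ∈ Sol f g x) :
    phi f g x = ((f x y₀ : ℝ) : EReal) := by
  apply le_antisymm
  · exact sInf_le ⟨y₀, h.1, rfl⟩
  · apply le_sInf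
    rintro v ⟨z, hz, rfl⟩
    exact EReal.coe_le_coe_iff.mpr (h.2 z hz)

theorem phi_toReal_of_sol {x : Fin n → ℝ} {y₀ : Fin m → ℝ} (h : y₀ ∈ Sol f g x) :
    (phi f g x).toReal = f x y₀ := by
  rw [phi_eq_of_sol h]; exact EReal.toReal_coe _

theorem mem_sol_of_le {x : Fin n → ℝ} {y₀ z : Fin m → ℝ} (h : y₀ ∈ Sol f g x)
    (hz : ∀ i, g x z i ≤ 0) (hle : f x z ≤ f x y₀) : z ∈ Sol f g x :=
  ⟨hz, fun z' hz' => hle.trans (h.2 z' hz')⟩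

theorem isc_near {xb : Fin n → ℝ} {yb : Fin m → ℝ}
    (hisc : InnerSemicontinuous (Sol f g) xb yb) :
    ∀ δ : ℝ, 0 < δ → ∃ ε : ℝ, 0 < ε ∧ ∀ x : Fin n → ℝ, dist x xb < ε →
      ∃ w ∈ Sol f g x, dist w yb ≤ δ := by
  intro δ hδ
  by_contra hcon
  push_neg at hcon
  have hseq : ∀ k : ℕ, ∃ x : Fin n → ℝ, dist x xb < 1 / (k + 1) ∧
      ∀ w ∈ Sol f g x, δ < dist w yb := by
    intro k
    obtain ⟨x, hx1, hx2⟩ := hcon (1 / (k + 1)) (by positivity)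
    exact ⟨x, hx1, hx2⟩
  choose x hx1 hx2 using hseq
  have htend : Tendsto x atTop (𝓝 xb) := by
    rw [Metric.tendsto_atTop]
    intro ε hε
    obtain ⟨N, hN⟩ := exists_nat_one_div_lt hε
    refine ⟨N, fun k hk => lt_of_lt_of_le (hx1 k) ?_⟩
    have hNk : (N : ℝ) ≤ (k : ℝ) := Nat.cast_le.mpr hk
    have h1 : (1:ℝ) / (k + 1) ≤ 1 / (N + 1) := by
      apply div_le_div_of_nonneg_left zero_le_one
      · positivity
      · linarith
    linarith
  obtain ⟨y, hy1, hy2⟩ := hisc x htend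
  have hy3 : ∀ᶠ k in atTop, dist (y k) yb < δ := by
    rw [Metric.tendsto_atTop] at hy1
    obtain ⟨N, hN⟩ := hy1 δ hδ
    exact eventually_atTop.mpr ⟨N, hN⟩
  obtain ⟨k, hk1, hk2⟩ := (hy2.and hy3).exists
  exact absurd hk2 (not_lt.mpr (hx2 k _ hk1).le)
end Glue
end AuxRRCQ

/-- Theorem 4.5: for a lower level problem `min_y { c(x)ᵀy | A(x) + B(x)y ≤ 0 }` with
locally Lipschitz data, inner semicontinuity of `S` at `(x̄,ȳ)` and a local constant row
rank condition on the submatrices `𝓑(x)_J` of `𝓑(x) = [c(x)ᵀ; B(x)_{I(x̄,ȳ)}]` imply RRCQ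
at `(x̄,ȳ)`. -/
theorem rrcq_linear_in_y {n m q : ℕ}
    (c : (Fin n → ℝ) → Fin m → ℝ) (A : (Fin n → ℝ) → Fin q → ℝ)
    (B : (Fin n → ℝ) → Fin q → Fin m → ℝ)
    (hc : LocallyLipschitz c) (hA : LocallyLipschitz A) (hB : LocallyLipschitz B)
    (xb : Fin n → ℝ) (yb : Fin m → ℝ)
    (hgph : yb ∈ Sol (fun x y => ∑ j, c x j * y j)
      (fun x y i => A x i + ∑ j, B x i j * y j) xb)
    (hisc : InnerSemicontinuous
      (Sol (fun x y => ∑ j, c x j * y j) (fun x y i => A x i + ∑ j, B x i j * y j)) xb yb)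
    (hCR : ∃ U ∈ 𝓝 xb, ∀ J : Set (Option (Fin q)),
      (∀ io ∈ J, ∀ j : Fin q, io = some j → A xb j + ∑ k, B xb j k * yb k = 0) →
      ∃ r : ℕ, ∀ x ∈ U,
        Module.finrank ℝ ↥(Submodule.span ℝ (Brow c B x '' J)) = r) :
    RRCQ (fun x y => ∑ j, c x j * y j)
      (fun x y i => A x i + ∑ j, B x i j * y j) xb yb := by
  classical
  set f : (Fin n → ℝ) → (Fin m → ℝ) → ℝ := fun x y => ∑ j, c x j * y j with hfdef
  set g : (Fin n → ℝ) → (Fin m → ℝ) → Fin q → ℝ :=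
    fun x y i => A x i + ∑ j, B x i j * y j with hgdef
  obtain ⟨U, hU, hrank⟩ := hCR
  obtain ⟨ε₀', hε₀'sub, hε₀'open, hε₀'mem⟩ := mem_nhds_iff.mp hU
  obtain ⟨ε₀'', hε₀''pos, hballsub⟩ := Metric.isOpen_iff.mp hε₀'open xb hε₀'mem
  set ε₀ : ℝ := ε₀'' / 2 with hε₀def
  have hε₀pos : 0 < ε₀ := by positivity
  set Kball : Set (Fin n → ℝ) := Metric.closedBall xb ε₀ with hKballdef
  have hsubU : Kball ⊆ U := by
    intro x hx
    apply hε₀'sub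
    apply hballsub
    rw [Metric.mem_ball]
    rw [Metric.mem_closedBall] at hx
    linarith
  have hKcomp : IsCompact Kball := isCompact_closedBall xb ε₀
  set activeP : Fin q → Prop := fun i => A xb i + ∑ k, B xb i k * yb k = 0 with hactdef
  set Tset : Finset (Option (Fin q)) :=
    insert none ((Finset.univ.filter activeP).image some) with hTdef
  set w : (Fin n → ℝ) → ↥Tset → EuclideanSpace ℝ (Fin m) :=
    fun x α => eE (Brow c B x α.1) with hwdef
  have hw : ∀ α : ↥Tset, Continuous fun x => w x α := by
    rintro ⟨io, hio⟩
    apply continuous_eE.comp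
    cases io with
    | none => exact hc.continuous
    | some j =>
        show Continuous fun x => B x j
        exact (continuous_apply j).comp hB.continuous
  -- constant rank transfer
  have hcrK : ∀ (S : Finset ↥Tset) (x' : Fin n → ℝ), x' ∈ Kball →
      LinearIndependent ℝ (fun i : ↥S => w x' i) →
      ∀ x'' ∈ Kball, LinearIndependent ℝ (fun i : ↥S => w x'' i) := by
    intro S x' hx' hind x'' hx''
    set J : Set (Option (Fin q)) :=
      (fun α : ↥Tset => (α : Option (Fin q))) '' (↑S : Set ↥Tset) with hJdef
    have hact : ∀ io ∈ J, ∀ j : Fin q, io = some j →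
        A xb j + ∑ k, B xb j k * yb k = 0 := by
      rintro io ⟨α, hαS, rfl⟩ j hj
      have hj' : (α : Option (Fin q)) = some j := hj
      have hmem : (α : Option (Fin q)) ∈ Tset := α.2
      rw [hj', hTdef] at hmem
      simp only [Finset.mem_insert, Finset.mem_image, Finset.mem_filter] at hmem
      rcases hmem with h | ⟨i, ⟨_, hi⟩, hsome⟩
      · exact absurd h (Option.some_ne_none j)
      · have : i = j := Option.some_injective _ hsome
        rw [← this]
        exact hi
    obtain ⟨r, hr⟩ := hrank J hact
    have hcard : ∀ x₃ : Fin n → ℝ, x₃ ∈ U →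
        (LinearIndependent ℝ (fun i : ↥S => w x₃ i) ↔ Fintype.card ↥S = r) := by
      intro x₃ hx₃
      have e1 : (fun i : ↥S => w x₃ i)
          = fun i : ↥S => eE (Brow c B x₃ ((i : ↥Tset) : Option (Fin q))) := rfl
      rw [e1, linearIndependent_eE_iff, linearIndependent_iff_card_eq_finrank_span]
      have e2 : Set.range (fun i : ↥S => Brow c B x₃ ((i : ↥Tset) : Option (Fin q)))
          = Brow c B x₃ '' J := by
        ext v
        constructor
        · rintro ⟨i, rfl⟩
          exact ⟨((i : ↥Tset) : Option (Fin q)), ⟨(i : ↥Tset), i.2, rfl⟩, rfl⟩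
        · rintro ⟨io, ⟨α, hαS, rfl⟩, rfl⟩
          exact ⟨⟨α, hαS⟩, rfl⟩
      rw [e2]
      have e3 : (Brow c B x₃ '' J).finrank ℝ
          = Module.finrank ℝ ↥(Submodule.span ℝ (Brow c B x₃ '' J)) := rfl
      rw [e3, hr x₃ hx₃]
    exact (hcard x'' (hsubU hx'')).mpr ((hcard x' (hsubU hx')).mp hind)
  obtain ⟨C, hC0, hmodC⟩ := uniform_modulus Kball hKcomp w hw hcrK
  -- margin for inactive constraints
  have hmarg : ∃ ε₁ : ℝ, 0 < ε₁ ∧ ∀ x z, dist x xb ≤ ε₁ → dist z yb ≤ ε₁ →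
      ∀ i : Fin q, ¬ activeP i → A x i + ∑ j, B x i j * z j ≤ 0 := by
    have hev : ∀ᶠ p : (Fin n → ℝ) × (Fin m → ℝ) in 𝓝 (xb, yb),
        ∀ i : Fin q, ¬ activeP i → A p.1 i + ∑ j, B p.1 i j * p.2 j ≤ 0 := by
      rw [eventually_all]
      intro i
      by_cases hi : activeP i
      · filter_upwards with p h
        exact absurd hi h
      · have hfeas := hgph.1 i
        have hlt : A xb i + ∑ j, B xb i j * yb j < 0 := lt_of_le_of_ne hfeas hi
        have hcont : Continuous fun p : (Fin n → ℝ) × (Fin m → ℝ) =>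
            A p.1 i + ∑ j, B p.1 i j * p.2 j := by
          apply Continuous.add
          · exact (continuous_apply i).comp (hA.continuous.comp continuous_fst)
          · apply continuous_finset_sum
            intro j _
            exact (((continuous_apply j).comp ((continuous_apply i).comp
              (hB.continuous.comp continuous_fst)))).mul
              ((continuous_apply j).comp continuous_snd)
        have := (hcont.tendsto (xb, yb)).eventually_lt_const hlt
        filter_upwards [this] with p hp _
        exact hp.le
    rw [Metric.eventually_nhds_iff] at hev
    obtain ⟨ε₁', hε₁'pos, hev⟩ := hev
    refine ⟨ε₁' / 2, by positivity, ?_⟩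
    intro x z hx hz i hi
    have hd : dist (x, z) (xb, yb) < ε₁' := by
      rw [Prod.dist_eq]
      apply max_lt <;> linarith
    exact hev hd i hi
  obtain ⟨ε₁, hε₁pos, hmarg⟩ := hmarg
  obtain ⟨ε₂, hε₂pos, hisc2⟩ := isc_near hisc 1 one_pos
  set ε₃ : ℝ := min ε₀ ε₁ with hε₃def
  have hε₃pos : 0 < ε₃ := lt_min hε₀pos hε₁pos
  set ρ : ℝ := ε₃ / (2 * (C + 1)) with hρdef
  have hρpos : 0 < ρ := by positivity
  set ε : ℝ := min (min (ε₃ / 2) ε₂) ρ with hεdef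
  have hεpos : 0 < ε := lt_min (lt_min (by positivity) hε₂pos) hρpos
  set κ : ℝ := C + (ε + 1) / ρ + 1 with hκdef
  have hκpos : 0 < κ := by positivity
  refine ⟨κ, hκpos, ε, hεpos, ?_⟩
  intro x y hx hy hne
  obtain ⟨y₀, hy₀⟩ := hne
  set Rq : ℝ := max (max 0 (f x y - (phi f g x).toReal))
    (Finset.univ.fold max 0 fun i => g x y i) with hRqdef
  have hRq0 : 0 ≤ Rq := le_trans (le_max_left 0 _) (le_max_left _ _)
  show Metric.infDist y (Sol f g x) ≤ κ * Rq
  have hε₃ε₀ : ε₃ ≤ ε₀ := min_le_left _ _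
  have hε₃ε₁ : ε₃ ≤ ε₁ := min_le_right _ _
  have hεhalf : ε ≤ ε₃ / 2 := le_trans (min_le_left _ _) (min_le_left _ _)
  have hεε₀ : ε ≤ ε₀ := by linarith
  have hεε₂ : ε ≤ ε₂ := le_trans (min_le_left _ _) (min_le_right _ _)
  rcases le_or_gt Rq ρ with hsmall | hbig
  · -- Hoffman branch
    set b : ↥Tset → ℝ :=
      fun α => (α : Option (Fin q)).elim ((phi f g x).toReal) (fun i => -(A x i)) with hbdef
    have hxK : x ∈ Kball := by
      rw [hKballdef, Metric.mem_closedBall]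
      linarith
    have hphiR : (phi f g x).toReal = f x y₀ := phi_toReal_of_sol hy₀
    have hfeasz : ∀ α : ↥Tset, ⟪w x α, eE y₀⟫ ≤ b α := by
      rintro ⟨io, hio⟩
      cases io with
      | none =>
          show ⟪eE (c x), eE y₀⟫ ≤ (phi f g x).toReal
          rw [innerE, hphiR]
      | some i =>
          show ⟪eE (B x i), eE y₀⟫ ≤ -(A x i)
          rw [innerE]
          have h2 : A x i + ∑ j, B x i j * y₀ j ≤ 0 := hy₀.1 i
          linarith
    have hres : ∀ α : ↥Tset, ⟪w x α, eE y⟫ - b α ≤ Rq := by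
      rintro ⟨io, hio⟩
      cases io with
      | none =>
          show ⟪eE (c x), eE y⟫ - (phi f g x).toReal ≤ Rq
          rw [innerE]
          have h1 : f x y - (phi f g x).toReal ≤ max 0 (f x y - (phi f g x).toReal) :=
            le_max_right _ _
          have h2 : max 0 (f x y - (phi f g x).toReal) ≤ Rq := le_max_left _ _
          have h3 : (∑ j, c x j * y j) = f x y := rfl
          rw [h3]
          linarith
      | some i =>
          show ⟪eE (B x i), eE y⟫ - (-(A x i)) ≤ Rq
          rw [innerE]
          have h1 : g x y i ≤ Finset.univ.fold max 0 fun i => g x y i := by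
            rw [Finset.le_fold_max]
            exact Or.inr ⟨i, Finset.mem_univ i, le_refl _⟩
          have h2 : (Finset.univ.fold max 0 fun i => g x y i) ≤ Rq := le_max_right _ _
          have h3 : g x y i = A x i + ∑ j, B x i j * y j := rfl
          rw [h3] at h1
          linarith
    obtain ⟨p, hpfeas, hpdist⟩ := hoffman_fixed (w x) b C Rq hC0 hRq0
      (hmodC x hxK) ⟨eE y₀, hfeasz⟩ (eE y) hres
    set p' : Fin m → ℝ := (WithLp.equiv 2 (Fin m → ℝ)) p with hp'def
    have hep' : eE p' = p := (WithLp.equiv 2 (Fin m → ℝ)).symm_apply_apply p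
    have hdp : dist y p' ≤ C * Rq := by
      refine le_trans (dist_le_norm_eE y p') ?_
      rw [hep']
      exact hpdist
    have hCρ : C * Rq ≤ ε₃ / 2 := by
      have h1 : C * Rq ≤ C * ρ := mul_le_mul_of_nonneg_left hsmall hC0
      have h2 : C * ρ ≤ ε₃ / 2 := by
        rw [hρdef]
        rw [show C * (ε₃ / (2 * (C + 1))) = (C * ε₃) / (2 * (C + 1)) by ring]
        rw [div_le_div_iff₀ (by positivity) (by norm_num : (0:ℝ) < 2)]
        nlinarith [hε₃pos.le, hC0]
      linarith
    have hdp'yb : dist p' yb ≤ ε₃ := by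
      calc dist p' yb ≤ dist p' y + dist y yb := dist_triangle _ _ _
        _ ≤ C * Rq + ε := add_le_add (by rw [dist_comm]; exact hdp) hy.le
        _ ≤ ε₃ / 2 + ε₃ / 2 := add_le_add hCρ hεhalf
        _ = ε₃ := by ring
    have hp'Sol : p' ∈ Sol f g x := by
      have hfeasAll : ∀ i : Fin q, g x p' i ≤ 0 := by
        intro i
        by_cases hiact : activeP i
        · have hmemT : (some i : Option (Fin q)) ∈ Tset := by
            rw [hTdef]
            exact Finset.mem_insert_of_mem (Finset.mem_image_of_mem some
              (Finset.mem_filter.mpr ⟨Finset.mem_univ i, hiact⟩))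
          have h2 : ⟪eE (B x i), p⟫ ≤ -(A x i) := hpfeas ⟨some i, hmemT⟩
          rw [← hep', innerE] at h2
          show A x i + ∑ j, B x i j * p' j ≤ 0
          linarith
        · apply hmarg x p' _ _ i hiact
          · linarith
          · linarith
      have hopt : f x p' ≤ f x y₀ := by
        have hmemT : (none : Option (Fin q)) ∈ Tset := by
          rw [hTdef]
          exact Finset.mem_insert_self _ _
        have h2 : ⟪eE (c x), p⟫ ≤ (phi f g x).toReal := hpfeas ⟨none, hmemT⟩
        rw [← hep', innerE, hphiR] at h2
        exact h2
      exact mem_sol_of_le hy₀ hfeasAll hopt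
    calc Metric.infDist y (Sol f g x) ≤ dist y p' := Metric.infDist_le_dist_of_mem hp'Sol
      _ ≤ C * Rq := hdp
      _ ≤ κ * Rq := by
          apply mul_le_mul_of_nonneg_right _ hRq0
          rw [hκdef]
          have h4 : 0 ≤ (ε + 1) / ρ := by positivity
          linarith
  · obtain ⟨w', hw'Sol, hw'1⟩ := hisc2 x (lt_of_lt_of_le hx hεε₂)
    calc Metric.infDist y (Sol f g x) ≤ dist y w' := Metric.infDist_le_dist_of_mem hw'Sol
      _ ≤ dist y yb + dist yb w' := dist_triangle _ _ _
      _ ≤ ε + 1 := add_le_add hy.le (by rw [dist_comm]; exact hw'1)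
      _ = ((ε + 1) / ρ) * ρ := (div_mul_cancel₀ _ (ne_of_gt hρpos)).symm
      _ ≤ ((ε + 1) / ρ) * Rq := mul_le_mul_of_nonneg_left hbig.le (by positivity)
      _ ≤ κ * Rq := by
          apply mul_le_mul_of_nonneg_right _ hRq0
          rw [hκdef]
          linarith
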